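/- Let n = 1, m > 0 and θ = 1/2. Then there exist positive constants C₁, C₂ and t₀ > 1 such that for all t ≥ t₀ and all P₁ ∈ ℝ, (C₁/(m²+2)) P₁² log t ≤ ∫_{|ξ| ≤ 1} |φ(t,ξ)|² dξ ≤ (C₂/m²) P₁² log t. -/

import Mathlib

open MeasureTheory Real

noncomputable section

/-- Euclidean space `ℝⁿ`. -/
abbrev E (n : ℕ) := EuclideanSpace ℝ (Fin n)

/-- The asymptotic profile `φ(t,ξ)`, as a function of `r = |ξ|`. -/
def phi (m θ P₁ t r : ℝ) : ℝ :=
  P₁ * Real.exp (-(r ^ 2) * t / 2) *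
    Real.sin (t * Real.sqrt (r ^ 2 + m ^ 2 * Real.log (1 + r ^ (2 * θ)))) /
    Real.sqrt (r ^ 2 + m ^ 2 * Real.log (1 + r ^ (2 * θ)))

open intervalIntegral

def Qf (m r : ℝ) : ℝ := r^2 + m^2 * Real.log (1+r)
def Qd (m r : ℝ) : ℝ := 2*r + m^2 / (1+r)
def Qdd (m r : ℝ) : ℝ := 2 - m^2 / (1+r)^2
def Ff (m t r : ℝ) : ℝ := Real.exp (-(r^2)*t) * Real.sin (t * Real.sqrt (Qf m r)) ^ 2 / Qf m r
def DD (m t r : ℝ) : ℝ := t * (Real.sqrt (Qf m r) * Qd m r)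
def DDd (m t r : ℝ) : ℝ :=
  t * (Qd m r/(2*Real.sqrt (Qf m r)) * Qd m r + Real.sqrt (Qf m r) * Qdd m r)
def psiF (m t r : ℝ) : ℝ := Real.exp (-(r^2)*t) / DD m t r
def psiD (m t r : ℝ) : ℝ :=
  ((-(2*r)*t) * Real.exp (-(r^2)*t) * DD m t r - Real.exp (-(r^2)*t) * DDd m t r)
    / (DD m t r)^2
def vF (m t r : ℝ) : ℝ := Real.sin (2*t*Real.sqrt (Qf m r))
def vD (m t r : ℝ) : ℝ :=
  Real.cos (2*t*Real.sqrt (Qf m r)) * (2*t*(Qd m r / (2*Real.sqrt (Qf m r))))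


lemma log1p_le {r : ℝ} (h0 : 0 ≤ r) : Real.log (1+r) ≤ r := by
  have := Real.log_le_sub_one_of_pos (x := 1+r) (by linarith)
  linarith

lemma log1p_ge {r : ℝ} (h0 : 0 ≤ r) (h1 : r ≤ 1) : r/2 ≤ Real.log (1+r) := by
  rw [Real.le_log_iff_exp_le (by linarith)]
  have h2 : (1:ℝ) - r/2 ≤ Real.exp (-(r/2)) := by
    have := Real.add_one_le_exp (-(r/2)); linarith
  have h3 : 0 < Real.exp (-(r/2)) := Real.exp_pos _
  have h4 : Real.exp (r/2) * Real.exp (-(r/2)) = 1 := by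
    rw [← Real.exp_add]; simp
  nlinarith [Real.exp_pos (r/2)]

lemma Qf_nonneg (m : ℝ) {r : ℝ} (h0 : 0 ≤ r) : 0 ≤ Qf m r := by
  have : 0 ≤ Real.log (1+r) := Real.log_nonneg (by linarith)
  have : 0 ≤ m^2 * Real.log (1+r) := by positivity
  unfold Qf; positivity

lemma Qf_pos (m : ℝ) {r : ℝ} (h0 : 0 < r) : 0 < Qf m r := by
  have h1 : 0 ≤ Real.log (1+r) := Real.log_nonneg (by linarith)
  have : 0 ≤ m^2 * Real.log (1+r) := by positivity
  have : 0 < r^2 := by positivity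
  unfold Qf; linarith

lemma Qf_le (m : ℝ) {r : ℝ} (h0 : 0 ≤ r) (h1 : r ≤ 1) : Qf m r ≤ (1+m^2)*r := by
  have := log1p_le h0
  have hm : 0 ≤ m^2 := sq_nonneg m
  unfold Qf; nlinarith

lemma Qf_ge (m : ℝ) {r : ℝ} (h0 : 0 ≤ r) (h1 : r ≤ 1) : m^2*r/2 ≤ Qf m r := by
  have := log1p_ge h0 h1
  have hm : 0 ≤ m^2 := sq_nonneg m
  unfold Qf; nlinarith

lemma Qd_ge (m : ℝ) {r : ℝ} (h0 : 0 ≤ r) (h1 : r ≤ 1) : m^2/2 ≤ Qd m r := by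
  unfold Qd
  have h2 : m^2/2 ≤ m^2/(1+r) :=
    div_le_div_of_nonneg_left (sq_nonneg m) (by linarith) (by linarith)
  linarith

lemma Qd_pos {m : ℝ} (hm : 0 < m) {r : ℝ} (h0 : 0 ≤ r) (h1 : r ≤ 1) : 0 < Qd m r := by
  have := Qd_ge m h0 h1
  have : 0 < m^2 := by positivity
  linarith

lemma hasDerivAt_Qf (m : ℝ) {r : ℝ} (h : -1 < r) : HasDerivAt (Qf m) (Qd m r) r := by
  have h1 : HasDerivAt (fun r : ℝ => r^2) (2*r) r := by
    simpa using hasDerivAt_pow 2 r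
  have h2 : HasDerivAt (fun r : ℝ => Real.log (1+r)) (1/(1+r)) r := by
    have : HasDerivAt (fun r : ℝ => 1+r) 1 r := (hasDerivAt_id r).const_add 1
    simpa using this.log (by linarith)
  have := h1.add ((h2.const_mul (m^2)))
  have heq : 2*r + m^2 * (1/(1+r)) = Qd m r := by unfold Qd; ring
  rw [← heq]; exact this

lemma hasDerivAt_sqrtQf (m : ℝ) {r : ℝ} (h : 0 < r) :
    HasDerivAt (fun r => Real.sqrt (Qf m r)) (Qd m r/(2*Real.sqrt (Qf m r))) r :=
  (hasDerivAt_Qf m (by linarith)).sqrt (ne_of_gt (Qf_pos m h))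

lemma Ff_nonneg (m t : ℝ) {r : ℝ} (h0 : 0 ≤ r) : 0 ≤ Ff m t r := by
  have := Qf_nonneg m h0
  unfold Ff; positivity

lemma Ff_le_tsq (m t : ℝ) {r : ℝ} (h0 : 0 ≤ r) (ht : 0 ≤ t) : Ff m t r ≤ t^2 := by
  rcases eq_or_lt_of_le h0 with h | h
  · simp [Ff, Qf, ← h]; positivity
  · have hQ := Qf_pos m h
    have hexp : Real.exp (-(r^2)*t) ≤ 1 := by
      rw [Real.exp_le_one_iff]; nlinarith
    have hsin : Real.sin (t * Real.sqrt (Qf m r)) ^ 2 ≤ (t * Real.sqrt (Qf m r))^2 :=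
      Real.sin_sq_le_sq
    have hsq : (t * Real.sqrt (Qf m r))^2 = t^2 * Qf m r := by
      rw [mul_pow, Real.sq_sqrt hQ.le]
    rw [Ff, div_le_iff₀ hQ]
    have h1 : Real.sin (t * Real.sqrt (Qf m r)) ^ 2 ≤ t^2 * Qf m r := by
      rw [← hsq]; exact hsin
    nlinarith [sq_nonneg (Real.sin (t * Real.sqrt (Qf m r))), Real.exp_pos (-(r^2)*t)]

lemma Ff_le_inv (m t : ℝ) {r : ℝ} (h0 : 0 < r) (h1 : r ≤ 1) (hm : 0 < m) (ht : 0 ≤ t) :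
    Ff m t r ≤ 2/(m^2*r) := by
  have hQ := Qf_pos m h0
  have hQge := Qf_ge m h0.le h1
  have hmr : 0 < m^2*r := by positivity
  have hsin : Real.sin (t * Real.sqrt (Qf m r)) ^ 2 ≤ 1 := by
    have h1 := Real.neg_one_le_sin (t * Real.sqrt (Qf m r))
    have h2 := Real.sin_le_one (t * Real.sqrt (Qf m r))
    nlinarith
  have hexp : Real.exp (-(r^2)*t) ≤ 1 := by
    rw [Real.exp_le_one_iff]; nlinarith
  rw [Ff, div_le_div_iff₀ hQ hmr]
  calc Real.exp (-(r^2)*t) * Real.sin (t * Real.sqrt (Qf m r)) ^ 2 * (m^2*r)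
      ≤ 1 * 1 * (m^2*r) := by
        have he0 := Real.exp_pos (-(r^2)*t)
        have hs0 := sq_nonneg (Real.sin (t * Real.sqrt (Qf m r)))
        have hes : Real.exp (-(r^2)*t) * Real.sin (t * Real.sqrt (Qf m r)) ^ 2 ≤ 1 :=
          mul_le_one₀ hexp hs0 hsin
        nlinarith
    _ = m^2*r := by ring
    _ ≤ 2 * Qf m r := by linarith

lemma phi_sq_eq (m t P₁ ξ : ℝ) :
    (phi m (1/2) P₁ t |ξ|)^2 = P₁^2 * Ff m t |ξ| := by
  have hr : (0:ℝ) ≤ |ξ| := abs_nonneg ξ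
  have hpow : |ξ| ^ (2 * (1/2 : ℝ)) = |ξ| := by
    norm_num
  rw [phi, hpow]
  rcases eq_or_lt_of_le hr with h | h
  · simp [Ff, Qf, ← h]
  · have hQ : (0:ℝ) < |ξ|^2 + m^2 * Real.log (1+|ξ|) := Qf_pos m h
    have hs : Real.sqrt (|ξ|^2 + m^2 * Real.log (1+|ξ|)) ^ 2
        = |ξ|^2 + m^2 * Real.log (1+|ξ|) := Real.sq_sqrt hQ.le
    have he : Real.exp (-(|ξ|^2) * t / 2) ^ 2 = Real.exp (-(|ξ|^2)*t) := by
      rw [sq, ← Real.exp_add]; ring_nf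
    rw [Ff, Qf, div_pow, mul_pow, mul_pow, hs, he]
    ring

lemma hasDerivAt_Qd (m : ℝ) {r : ℝ} (h : -1 < r) : HasDerivAt (Qd m) (Qdd m r) r := by
  have h1 : HasDerivAt (fun r : ℝ => 2*r) (2*1) r := (hasDerivAt_id r).const_mul 2
  have h2 : HasDerivAt (fun r : ℝ => 1+r) 1 r := (hasDerivAt_id r).const_add 1
  have h3 : HasDerivAt (fun r : ℝ => m^2/(1+r)) ((0*(1+r) - m^2*1)/(1+r)^2) r :=
    (hasDerivAt_const r (m^2)).div h2 (by intro hc; linarith)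
  have h4 := h1.add h3
  have heq : 2*1 + (0*(1+r) - m^2*1)/(1+r)^2 = Qdd m r := by unfold Qdd; ring
  unfold Qd
  rw [← heq]
  exact h4




lemma hasDerivAt_exppart (t : ℝ) (r : ℝ) :
    HasDerivAt (fun r : ℝ => Real.exp (-(r^2)*t)) ((-(2*r)*t) * Real.exp (-(r^2)*t)) r := by
  have h1 : HasDerivAt (fun r : ℝ => -(r^2)*t) (-(2*r)*t) r := by
    have : HasDerivAt (fun r : ℝ => r^2) (2*r) r := by simpa using hasDerivAt_pow 2 r
    simpa using (this.neg.mul_const t)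
  simpa [mul_comm] using h1.exp

lemma hasDerivAt_DD (m : ℝ) {r : ℝ} (h : 0 < r) (t : ℝ) :
    HasDerivAt (DD m t) (DDd m t r) r := by
  have h1 := ((hasDerivAt_sqrtQf m h).mul (hasDerivAt_Qd m (by linarith))).const_mul t
  unfold DD DDd
  exact h1

lemma hasDerivAt_psiF {m : ℝ} (hm : 0 < m) {r : ℝ} (h : 0 < r) (h1 : r ≤ 1) {t : ℝ}
    (ht : 0 < t) : HasDerivAt (psiF m t) (psiD m t r) r := by
  have hD : DD m t r ≠ 0 := by
    have := Real.sqrt_pos.2 (Qf_pos m h)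
    have := Qd_pos hm h.le h1
    unfold DD; positivity
  unfold psiF psiD
  exact (hasDerivAt_exppart t r).div (hasDerivAt_DD m h t) hD

lemma hasDerivAt_vF (m : ℝ) {r : ℝ} (h : 0 < r) (t : ℝ) :
    HasDerivAt (vF m t) (vD m t r) r := by
  have h1 := ((hasDerivAt_sqrtQf m h).const_mul (2*t)).sin
  unfold vF vD
  simpa [mul_assoc] using h1

lemma psiD_nonpos {m : ℝ} (hm : 0 < m) {r t : ℝ} (h : 0 < r)
    (h1 : r ≤ m^2/(8*(1+m^2))) (ht : 0 < t) : psiD m t r ≤ 0 := by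
  have hr1 : r ≤ 1 := by
    have h8 : m^2/(8*(1+m^2)) ≤ 1 := by
      rw [div_le_one (by positivity)]; nlinarith [sq_nonneg m]
    linarith
  have hQ := Qf_pos m h
  have hsq : 0 < Real.sqrt (Qf m r) := Real.sqrt_pos.2 hQ
  have hQd := Qd_pos hm h.le hr1
  have hDpos : 0 < DD m t r := by unfold DD; positivity
  -- key: DDd ≥ 0
  have hDDd : 0 ≤ DDd m t r := by
    have hkey : 0 ≤ Qd m r ^ 2 + 2 * Qf m r * Qdd m r := by
      have hQle : Qf m r ≤ (1+m^2)*r := Qf_le m h.le hr1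
      have hQdge : m^2/(1+r) ≤ Qd m r := by
        unfold Qd; linarith
      have hQdd : -(m^2) ≤ Qdd m r := by
        unfold Qdd
        have h1r : (1:ℝ) ≤ (1+r)^2 := by nlinarith
        have : m^2/(1+r)^2 ≤ m^2 := by
          rw [div_le_iff₀ (by positivity)]; nlinarith [sq_nonneg m]
        linarith
      have hQddle : Qdd m r ≤ 2 := by
        unfold Qdd
        have : 0 ≤ m^2/(1+r)^2 := by positivity
        linarith
      have h4 : m^2/2 ≤ m^2/(1+r) := by
        apply div_le_div_of_nonneg_left (sq_nonneg m) (by linarith) (by linarith)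
      have hQdsq : m^4/4 ≤ Qd m r ^ 2 := by
        have : m^2/2 ≤ Qd m r := Qd_ge m h.le hr1
        nlinarith [sq_nonneg m]
      rcases le_or_gt 0 (Qdd m r) with hc | hc
      · nlinarith
      · have : 2 * Qf m r * Qdd m r ≥ 2 * ((1+m^2)*r) * Qdd m r := by
          nlinarith
        have hr2 : 2 * ((1+m^2)*r) * Qdd m r ≥ 2 * ((1+m^2)*r) * (-(m^2)) := by
          nlinarith [Qf_nonneg m h.le]
        have hrr : 2 * ((1+m^2)*r) * m^2 ≤ m^4/4 := by
          rw [le_div_iff₀ (by positivity : (0:ℝ) < 8*(1+m^2))] at h1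
          nlinarith [sq_nonneg m, sq_nonneg (m*m)]
        nlinarith
    have hss : Real.sqrt (Qf m r) * Real.sqrt (Qf m r) = Qf m r := Real.mul_self_sqrt hQ.le
    have hA : Qd m r/(2*Real.sqrt (Qf m r)) * Qd m r + Real.sqrt (Qf m r) * Qdd m r
        = (Qd m r ^ 2 + 2 * Qf m r * Qdd m r) / (2 * Real.sqrt (Qf m r)) := by
      rw [eq_div_iff (by positivity : (2*Real.sqrt (Qf m r)) ≠ 0)]
      field_simp
      linear_combination (2 * Qdd m r) * hss
    unfold DDd
    rw [hA]
    positivity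
  -- now psiD ≤ 0
  unfold psiD
  apply div_nonpos_of_nonpos_of_nonneg _ (sq_nonneg _)
  have he := Real.exp_pos (-(r^2)*t)
  have hterm1 : (-(2*r)*t) * Real.exp (-(r^2)*t) * DD m t r ≤ 0 := by
    have h2 : 0 ≤ (2*r*t) * (Real.exp (-(r^2)*t) * DD m t r) := by positivity
    nlinarith [h2]
  have h3 : 0 ≤ Real.exp (-(r^2)*t) * DDd m t r := mul_nonneg he.le hDDd
  linarith

lemma Qd_pos' {m : ℝ} (hm : 0 < m) {r : ℝ} (h0 : 0 < r) : 0 < Qd m r := by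
  have h1 : 0 < m^2/(1+r) := by positivity
  unfold Qd; linarith

lemma DD_pos {m : ℝ} (hm : 0 < m) {t r : ℝ} (ht : 0 < t) (h0 : 0 < r) : 0 < DD m t r := by
  have h1 := Real.sqrt_pos.2 (Qf_pos m h0)
  have h2 := Qd_pos' hm h0
  unfold DD; positivity

lemma psiF_nonneg {m : ℝ} (hm : 0 < m) {t r : ℝ} (ht : 0 < t) (h0 : 0 < r) :
    0 ≤ psiF m t r := by
  have := DD_pos hm ht h0
  unfold psiF; positivity

lemma intervalIntegrable_Ffabs (m : ℝ) {t : ℝ} (ht : 0 ≤ t) (a b : ℝ) :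
    IntervalIntegrable (fun ξ => Ff m t |ξ|) volume a b := by
  have hmeas : Measurable (fun ξ : ℝ => Ff m t |ξ|) := by
    have habs : Measurable (fun ξ : ℝ => |ξ|) := continuous_abs.measurable
    have hQm : Measurable (fun ξ : ℝ => Qf m |ξ|) := by
      unfold Qf
      exact (habs.pow measurable_const).add
        ((Real.measurable_log.comp (measurable_const.add habs)).const_mul _)
    have hsq : Measurable (fun ξ : ℝ => Real.sqrt (Qf m |ξ|)) :=
      Real.continuous_sqrt.measurable.comp hQm
    have hsin : Measurable (fun ξ : ℝ => Real.sin (t * Real.sqrt (Qf m |ξ|)) ^ 2) :=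
      (Real.measurable_sin.comp (hsq.const_mul t)).pow measurable_const
    have hexp : Measurable (fun ξ : ℝ => Real.exp (-(|ξ|^2)*t)) :=
      Real.measurable_exp.comp (((habs.pow measurable_const).neg).mul_const t)
    unfold Ff
    exact (hexp.mul hsin).div hQm
  rw [intervalIntegrable_iff]
  apply Integrable.mono' (g := fun _ : ℝ => t^2) _ hmeas.aestronglyMeasurable
  · filter_upwards with ξ
    rw [Real.norm_eq_abs, abs_of_nonneg (Ff_nonneg m t (abs_nonneg ξ))]
    exact Ff_le_tsq m t (abs_nonneg ξ) ht
  · exact integrableOn_const measure_Ioc_lt_top.ne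

section cont
variable {m t r : ℝ} (hm : 0 < m) (ht : t ≠ 0) (hr : 0 < r)

include hr in
lemma continuousAt_sqrtQf : ContinuousAt (fun r => Real.sqrt (Qf m r)) r :=
  (hasDerivAt_sqrtQf m hr).continuousAt

include hr in
lemma continuousAt_Qd' : ContinuousAt (Qd m) r :=
  (hasDerivAt_Qd m (by linarith)).continuousAt

include hr in
lemma continuousAt_Qdd : ContinuousAt (Qdd m) r := by
  unfold Qdd
  have h1 : (0:ℝ) < 1 + r := by linarith
  have h2 : ContinuousAt (fun y : ℝ => (1+y)^2) r := by fun_prop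
  exact continuousAt_const.sub (continuousAt_const.div h2 (pow_ne_zero 2 h1.ne'))

include hm ht hr in
lemma continuousAt_psiD : ContinuousAt (psiD m t) r := by
  have hsq := continuousAt_sqrtQf (m := m) hr
  have hsqpos := Real.sqrt_pos.2 (Qf_pos m hr)
  have hQd := continuousAt_Qd' (m := m) hr
  have hQdd := continuousAt_Qdd (m := m) hr
  have hDD : ContinuousAt (DD m t) r := (hasDerivAt_DD m hr t).continuousAt
  have hDDne : DD m t r ≠ 0 := by
    rcases ht.lt_or_gt with h | h
    · have h1 := Qd_pos' hm hr
      have : DD m t r < 0 := by unfold DD; exact mul_neg_of_neg_of_pos h (by positivity)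
      exact this.ne
    · exact (DD_pos hm h hr).ne'
  have hexp : ContinuousAt (fun r : ℝ => Real.exp (-(r^2)*t)) r :=
    (hasDerivAt_exppart t r).continuousAt
  have hDDd : ContinuousAt (DDd m t) r := by
    unfold DDd
    exact (((hQd.div (continuousAt_const.mul hsq) (mul_pos two_pos hsqpos).ne').mul hQd).add
      (hsq.mul hQdd)).const_mul t
  have hlin : ContinuousAt (fun r : ℝ => -(2*r)*t) r := by fun_prop
  unfold psiD
  exact (((hlin.mul hexp).mul hDD |>.sub
    (hexp.mul hDDd)).div (hDD.pow 2) (pow_ne_zero 2 hDDne))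

include hr in
lemma continuousAt_vD : ContinuousAt (vD m t) r := by
  have hsq := continuousAt_sqrtQf (m := m) hr
  have hsqpos := Real.sqrt_pos.2 (Qf_pos m hr)
  have hQd := continuousAt_Qd' (m := m) hr
  unfold vD
  exact (Real.continuous_cos.continuousAt.comp (continuousAt_const.mul hsq)).mul
    (continuousAt_const.mul (hQd.div (continuousAt_const.mul hsq) (by positivity)))

include hr in
lemma continuousAt_hf : ContinuousAt (fun r => Real.exp (-(r^2)*t) / Qf m r) r := by
  have hexp : ContinuousAt (fun r : ℝ => Real.exp (-(r^2)*t)) r :=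
    (hasDerivAt_exppart t r).continuousAt
  exact hexp.div (hasDerivAt_Qf m (by linarith)).continuousAt (Qf_pos m hr).ne'

include hr in
lemma continuousAt_coshf :
    ContinuousAt (fun r => Real.cos (2*t*Real.sqrt (Qf m r)) * (Real.exp (-(r^2)*t) / Qf m r)) r := by
  have hsq := continuousAt_sqrtQf (m := m) hr
  exact (Real.continuous_cos.continuousAt.comp (continuousAt_const.mul hsq)).mul
    (continuousAt_hf hr)

end cont

lemma intervalIntegrable_of_contAt {f : ℝ → ℝ} {a b : ℝ} (ha : 0 < a)
    (hcont : ∀ x : ℝ, 0 < x → ContinuousAt f x) (hab : a ≤ b) :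
    IntervalIntegrable f volume a b := by
  apply ContinuousOn.intervalIntegrable
  intro x hx
  rw [Set.uIcc_of_le hab] at hx
  exact (hcont x (lt_of_lt_of_le ha hx.1)).continuousWithinAt

lemma rstar_le_one {m : ℝ} (hm : 0 < m) : m^2/(8*(1+m^2)) ≤ 1 := by
  rw [div_le_one (by positivity)]; nlinarith [sq_nonneg m]

lemma oscillation_bound {m : ℝ} (hm : 0 < m) {t a b : ℝ} (ht : 0 < t)
    (ha : 0 < a) (hab : a ≤ b) (hbstar : b ≤ m^2/(8*(1+m^2))) :
    |∫ r in a..b, Real.cos (2*t*Real.sqrt (Qf m r)) * (Real.exp (-(r^2)*t)/Qf m r)|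
      ≤ 2 * psiF m t a := by
  have hb1 : b ≤ 1 := hbstar.trans (rstar_le_one hm)
  have hpos : ∀ x ∈ Set.uIcc a b, 0 < x := by
    intro x hx
    rw [Set.uIcc_of_le hab] at hx
    exact lt_of_lt_of_le ha hx.1
  -- rewrite integrand as psiF * vD
  have hcong : ∀ x ∈ Set.uIcc a b,
      Real.cos (2*t*Real.sqrt (Qf m x)) * (Real.exp (-(x^2)*t)/Qf m x)
        = psiF m t x * vD m t x := by
    intro x hx
    have hx0 := hpos x hx
    have hQ := Qf_pos m hx0
    have hsq : 0 < Real.sqrt (Qf m x) := Real.sqrt_pos.2 hQ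
    have hss : Real.sqrt (Qf m x) * Real.sqrt (Qf m x) = Qf m x := Real.mul_self_sqrt hQ.le
    have hQd := Qd_pos' hm hx0
    unfold psiF vD DD
    field_simp
    ring_nf
    rw [Real.sq_sqrt hQ.le]
    ring
  rw [intervalIntegral.integral_congr hcong]
  -- integration by parts
  have hderpsi : ∀ x ∈ Set.uIcc a b, HasDerivAt (psiF m t) (psiD m t x) x := by
    intro x hx
    have hx0 := hpos x hx
    have hx1 : x ≤ 1 := by
      rw [Set.uIcc_of_le hab] at hx
      exact le_trans hx.2 hb1
    exact hasDerivAt_psiF hm hx0 hx1 ht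
  have hderv : ∀ x ∈ Set.uIcc a b, HasDerivAt (vF m t) (vD m t x) x := fun x hx =>
    hasDerivAt_vF m (hpos x hx) t
  have hintpsiD : IntervalIntegrable (psiD m t) volume a b :=
    intervalIntegrable_of_contAt ha (fun x hx => continuousAt_psiD hm ht.ne' hx) hab
  have hintvD : IntervalIntegrable (vD m t) volume a b :=
    intervalIntegrable_of_contAt ha (fun x hx => continuousAt_vD hx) hab
  rw [intervalIntegral.integral_mul_deriv_eq_deriv_mul hderpsi hderv hintpsiD hintvD]
  -- estimates
  have hpsia : 0 ≤ psiF m t a := psiF_nonneg hm ht ha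
  have hpsib : 0 ≤ psiF m t b := psiF_nonneg hm ht (lt_of_lt_of_le ha hab)
  have hvabs : ∀ x, |vF m t x| ≤ 1 := fun x => Real.abs_sin_le_one _
  -- ∫ psiD = psiF b - psiF a
  have hftc : ∫ x in a..b, psiD m t x = psiF m t b - psiF m t a :=
    intervalIntegral.integral_eq_sub_of_hasDerivAt hderpsi hintpsiD
  -- |∫ psiD * vF| ≤ psiF a - psiF b
  have hcontvF : ∀ x : ℝ, 0 < x → ContinuousAt (vF m t) x := by
    intro x hx
    have h1 : ContinuousAt (fun r : ℝ => 2*t*Real.sqrt (Qf m r)) x :=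
      continuousAt_const.mul (continuousAt_sqrtQf (m := m) hx)
    exact Real.continuous_sin.continuousAt.comp h1
  have hbd : |∫ x in a..b, psiD m t x * vF m t x| ≤ psiF m t a - psiF m t b := by
    have h1 : |∫ x in a..b, psiD m t x * vF m t x| ≤ ∫ x in a..b, |psiD m t x * vF m t x| :=
      intervalIntegral.abs_integral_le_integral_abs hab
    have hintprod : IntervalIntegrable (fun x => psiD m t x * vF m t x) volume a b :=
      intervalIntegrable_of_contAt ha
        (fun x hx => (continuousAt_psiD hm ht.ne' hx).mul (hcontvF x hx)) hab
    have h2 : (∫ x in a..b, |psiD m t x * vF m t x|) ≤ ∫ x in a..b, -psiD m t x := by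
      apply intervalIntegral.integral_mono_on hab hintprod.abs hintpsiD.neg
      intro x hx
      have hx0 : 0 < x := lt_of_lt_of_le ha hx.1
      have hxstar : x ≤ m^2/(8*(1+m^2)) := le_trans hx.2 hbstar
      have hnp := psiD_nonpos hm hx0 hxstar ht
      rw [abs_mul]
      calc |psiD m t x| * |vF m t x| ≤ |psiD m t x| * 1 :=
            mul_le_mul_of_nonneg_left (hvabs x) (abs_nonneg _)
        _ = -psiD m t x := by rw [mul_one, abs_of_nonpos hnp]
    have h3 : (∫ x in a..b, -psiD m t x) = psiF m t a - psiF m t b := by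
      rw [intervalIntegral.integral_neg, hftc]; ring
    linarith
  -- assemble
  have hb1' : |psiF m t b * vF m t b| ≤ psiF m t b := by
    rw [abs_mul, abs_of_nonneg hpsib]
    exact mul_le_of_le_one_right hpsib (hvabs b)
  have ha1' : |psiF m t a * vF m t a| ≤ psiF m t a := by
    rw [abs_mul, abs_of_nonneg hpsia]
    exact mul_le_of_le_one_right hpsia (hvabs a)
  have htri : |psiF m t b * vF m t b - psiF m t a * vF m t a
      - ∫ x in a..b, psiD m t x * vF m t x|
      ≤ |psiF m t b * vF m t b| + |psiF m t a * vF m t a|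
        + |∫ x in a..b, psiD m t x * vF m t x| := by
    calc |psiF m t b * vF m t b - psiF m t a * vF m t a
        - ∫ x in a..b, psiD m t x * vF m t x|
        ≤ |psiF m t b * vF m t b - psiF m t a * vF m t a|
          + |∫ x in a..b, psiD m t x * vF m t x| := abs_sub _ _
      _ ≤ |psiF m t b * vF m t b| + |psiF m t a * vF m t a|
          + |∫ x in a..b, psiD m t x * vF m t x| := by
            have := abs_sub (psiF m t b * vF m t b) (psiF m t a * vF m t a)
            linarith
  linarith

lemma J_upper {m : ℝ} (hm : 0 < m) {t : ℝ} (ht3 : 3 ≤ t) (hlog : 1 ≤ Real.log t) :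
    (∫ ξ in (-1:ℝ)..1, Ff m t |ξ|) ≤ (2*m^2+8)/m^2 * Real.log t := by
  have ht0 : (0:ℝ) < t := by linarith
  set δ : ℝ := (t^2)⁻¹ with hδdef
  have hδ : 0 < δ := by positivity
  have ht1 : (1:ℝ) ≤ t^2 := by nlinarith
  have hδ1 : δ ≤ 1 := by
    rw [hδdef, inv_le_one_iff₀]; right; exact ht1
  -- split
  have e2 := intervalIntegral.integral_add_adjacent_intervals
    (intervalIntegrable_Ffabs m ht0.le (-δ) δ) (intervalIntegrable_Ffabs m ht0.le δ 1)
  have e1 := intervalIntegral.integral_add_adjacent_intervals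
    (intervalIntegrable_Ffabs m ht0.le (-1) (-δ)) (intervalIntegrable_Ffabs m ht0.le (-δ) 1)
  -- middle piece
  have hmid : (∫ ξ in (-δ)..δ, Ff m t |ξ|) ≤ 2 := by
    have h1 : (∫ ξ in (-δ)..δ, Ff m t |ξ|) ≤ ∫ _ in (-δ)..δ, t^2 :=
      intervalIntegral.integral_mono_on (by linarith) (intervalIntegrable_Ffabs m ht0.le _ _)
        intervalIntegrable_const (fun x _ => Ff_le_tsq m t (abs_nonneg x) ht0.le)
    rw [intervalIntegral.integral_const, smul_eq_mul] at h1
    have : (δ - -δ) * t^2 = 2 := by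
      rw [hδdef]; field_simp; ring
    linarith
  -- right piece
  have hright : (∫ ξ in δ..1, Ff m t |ξ|) ≤ 2/m^2 * (2*Real.log t) := by
    have hcont : IntervalIntegrable (fun x : ℝ => 2/m^2 * (1/x)) volume δ 1 := by
      apply ContinuousOn.intervalIntegrable
      intro x hx
      rw [Set.uIcc_of_le hδ1] at hx
      have hx0 : x ≠ 0 := by have := hx.1; intro hc; rw [hc] at this; linarith
      exact (continuousAt_const.mul (continuousAt_const.div continuousAt_id hx0)).continuousWithinAt
    have h1 : (∫ ξ in δ..1, Ff m t |ξ|) ≤ ∫ x in δ..1, 2/m^2 * (1/x) := by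
      apply intervalIntegral.integral_mono_on hδ1 (intervalIntegrable_Ffabs m ht0.le _ _) hcont
      intro x hx
      have hx0 : 0 < x := lt_of_lt_of_le hδ hx.1
      have : Ff m t |x| = Ff m t x := by rw [abs_of_pos hx0]
      rw [this]
      calc Ff m t x ≤ 2/(m^2*x) := Ff_le_inv m t hx0 hx.2 hm ht0.le
        _ = 2/m^2 * (1/x) := by field_simp
    have h2 : (∫ x in δ..1, 2/m^2 * (1/x)) = 2/m^2 * (2*Real.log t) := by
      rw [intervalIntegral.integral_const_mul, integral_one_div]
      · congr 1
        rw [hδdef, one_div, inv_inv, Real.log_pow]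
        norm_num
      · rw [Set.uIcc_of_le hδ1]
        rintro ⟨h1', h2'⟩; linarith
    linarith
  -- left piece
  have hleft : (∫ ξ in (-1:ℝ)..(-δ), Ff m t |ξ|) ≤ 2/m^2 * (2*Real.log t) := by
    have hcont : IntervalIntegrable (fun x : ℝ => 2/m^2 * (-(1/x))) volume (-1) (-δ) := by
      apply ContinuousOn.intervalIntegrable
      intro x hx
      rw [Set.uIcc_of_le (by linarith : (-1:ℝ) ≤ -δ)] at hx
      have hx0 : x ≠ 0 := by have := hx.2; intro hc; rw [hc] at this; linarith
      exact (continuousAt_const.mul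
        ((continuousAt_const.div continuousAt_id hx0).neg)).continuousWithinAt
    have h1 : (∫ ξ in (-1:ℝ)..(-δ), Ff m t |ξ|) ≤ ∫ x in (-1:ℝ)..(-δ), 2/m^2 * (-(1/x)) := by
      apply intervalIntegral.integral_mono_on (by linarith) (intervalIntegrable_Ffabs m ht0.le _ _) hcont
      intro x hx
      have hx0 : x < 0 := lt_of_le_of_lt hx.2 (by linarith)
      have habs : |x| = -x := abs_of_neg hx0
      have h1' : 0 < -x := by linarith
      have h2' : -x ≤ 1 := by have := hx.1; linarith
      rw [habs]
      calc Ff m t (-x) ≤ 2/(m^2*(-x)) := Ff_le_inv m t h1' h2' hm ht0.le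
        _ = 2/m^2 * (-(1/x)) := by
              have hxne : x ≠ 0 := ne_of_lt hx0
              field_simp
    have h2 : (∫ x in (-1:ℝ)..(-δ), 2/m^2 * (-(1/x))) = 2/m^2 * (2*Real.log t) := by
      rw [intervalIntegral.integral_const_mul, intervalIntegral.integral_neg, integral_one_div]
      · congr 1
        have h3 : (-δ)/(-1:ℝ) = δ := by norm_num
        rw [h3, hδdef, Real.log_inv, Real.log_pow]
        push_cast
        ring
      · rw [Set.uIcc_of_le (by linarith : (-1:ℝ) ≤ -δ)]
        rintro ⟨h1', h2'⟩; linarith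
    linarith
  -- combine
  have hfs : (2*m^2+8)/m^2 * Real.log t = 2*Real.log t + 8/m^2 * Real.log t := by
    field_simp
  have h8 : 2/m^2 * (2*Real.log t) + 2/m^2 * (2*Real.log t) = 8/m^2 * Real.log t := by ring
  have h2log : (2:ℝ) ≤ 2*Real.log t := by linarith
  rw [← e1, ← e2, hfs]
  linarith

lemma psiA_bound {m : ℝ} (hm : 0 < m) {t : ℝ} (ht1 : 1 ≤ t) :
    psiF m t t⁻¹ ≤ 2*Real.sqrt 2/(m^3*Real.sqrt t) := by
  have ht0 : (0:ℝ) < t := by linarith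
  have hst : 0 < Real.sqrt t := Real.sqrt_pos.2 ht0
  have hs2 : (0:ℝ) < Real.sqrt 2 := Real.sqrt_pos.2 (by norm_num)
  have ha : (0:ℝ) < t⁻¹ := by positivity
  have ha1 : t⁻¹ ≤ 1 := by
    rw [inv_le_one_iff₀]; right; exact ht1
  have hss : Real.sqrt t * Real.sqrt t = t := Real.mul_self_sqrt ht0.le
  have hss2 : Real.sqrt 2 * Real.sqrt 2 = 2 := Real.mul_self_sqrt (by norm_num)
  -- √(Qf a) ≥ m/(√2 √t)
  have hkey : m/(Real.sqrt 2*Real.sqrt t) ≤ Real.sqrt (Qf m t⁻¹) := by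
    have h1 : (m/(Real.sqrt 2*Real.sqrt t))^2 = m^2*t⁻¹/2 := by
      rw [div_pow, mul_pow, Real.sq_sqrt (by norm_num : (0:ℝ) ≤ 2), Real.sq_sqrt ht0.le]
      rw [sq]
      field_simp
    have h2 : m^2*t⁻¹/2 ≤ Qf m t⁻¹ := Qf_ge m ha.le ha1
    calc m/(Real.sqrt 2*Real.sqrt t)
        = Real.sqrt ((m/(Real.sqrt 2*Real.sqrt t))^2) := (Real.sqrt_sq (by positivity)).symm
      _ = Real.sqrt (m^2*t⁻¹/2) := by rw [h1]
      _ ≤ Real.sqrt (Qf m t⁻¹) := Real.sqrt_le_sqrt h2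
  have hQd : m^2/2 ≤ Qd m t⁻¹ := Qd_ge m ha.le ha1
  -- DD lower bound
  have hDlow : m^3*Real.sqrt t/(2*Real.sqrt 2) ≤ DD m t t⁻¹ := by
    have h1 : m/(Real.sqrt 2*Real.sqrt t) * (m^2/2) ≤ Real.sqrt (Qf m t⁻¹) * Qd m t⁻¹ := by
      apply mul_le_mul hkey hQd (by positivity)
      exact Real.sqrt_nonneg _
    have h2 : t * (m/(Real.sqrt 2*Real.sqrt t) * (m^2/2)) ≤ t * (Real.sqrt (Qf m t⁻¹) * Qd m t⁻¹) :=
      mul_le_mul_of_nonneg_left h1 ht0.le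
    have h3 : t * (m/(Real.sqrt 2*Real.sqrt t) * (m^2/2)) = m^3*Real.sqrt t/(2*Real.sqrt 2) := by
      field_simp
      linear_combination (-1 : ℝ) * hss
    rw [DD]
    linarith [h2, h3.symm.le]
  have hDlowpos : 0 < m^3*Real.sqrt t/(2*Real.sqrt 2) := by positivity
  have hexp : Real.exp (-((t⁻¹)^2)*t) ≤ 1 := by
    rw [Real.exp_le_one_iff]
    have : 0 ≤ (t⁻¹)^2 * t := by positivity
    linarith
  calc psiF m t t⁻¹ = Real.exp (-((t⁻¹)^2)*t) / DD m t t⁻¹ := rfl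
    _ ≤ 1 / (m^3*Real.sqrt t/(2*Real.sqrt 2)) := by
        apply div_le_div₀ (by norm_num) hexp hDlowpos hDlow
    _ = 2*Real.sqrt 2/(m^3*Real.sqrt t) := by
        rw [one_div_div]

set_option maxHeartbeats 1000000 in
lemma J_lower {m : ℝ} (hm : 0 < m) {t : ℝ} (ht3 : 3 ≤ t) (hlog : 1 ≤ Real.log t)
    (hbstar : (Real.sqrt t)⁻¹ ≤ m^2/(8*(1+m^2)))
    (herr : 2*Real.sqrt 2/(m^3*Real.sqrt t) ≤ 1/(8*Real.exp 1*(1+m^2))) :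
    1/(8*Real.exp 1*(1+m^2)) * Real.log t ≤ ∫ ξ in (-1:ℝ)..1, Ff m t |ξ| := by
  have ht0 : (0:ℝ) < t := by linarith
  have ht1 : (1:ℝ) ≤ t := by linarith
  have hst : 0 < Real.sqrt t := Real.sqrt_pos.2 ht0
  have hss : Real.sqrt t * Real.sqrt t = t := Real.mul_self_sqrt ht0.le
  have hst1 : 1 ≤ Real.sqrt t := by
    nlinarith [hss, hst]
  set a : ℝ := t⁻¹ with hadef
  set b : ℝ := (Real.sqrt t)⁻¹ with hbdef
  have ha : 0 < a := by positivity
  have hb : 0 < b := by positivity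
  have hsale : Real.sqrt t ≤ t := by nlinarith
  have hab : a ≤ b := by
    rw [hadef, hbdef]
    exact inv_anti₀ hst hsale
  have hb1 : b ≤ 1 := by
    rw [hbdef, inv_le_one_iff₀]; right; exact hst1
  have ha1 : a ≤ 1 := le_trans hab hb1
  have hbst : b ≤ m^2/(8*(1+m^2)) := hbstar
  -- step 1 : reduce to [a,b]
  have hstep1 : (∫ ξ in a..b, Ff m t |ξ|) ≤ ∫ ξ in (-1:ℝ)..1, Ff m t |ξ| := by
    have e2 := intervalIntegral.integral_add_adjacent_intervals
      (intervalIntegrable_Ffabs m ht0.le a b) (intervalIntegrable_Ffabs m ht0.le b 1)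
    have e1 := intervalIntegral.integral_add_adjacent_intervals
      (intervalIntegrable_Ffabs m ht0.le (-1) a) (intervalIntegrable_Ffabs m ht0.le a 1)
    have h1 : 0 ≤ ∫ ξ in (-1:ℝ)..a, Ff m t |ξ| :=
      intervalIntegral.integral_nonneg (by linarith)
        (fun u _ => Ff_nonneg m t (abs_nonneg u))
    have h3 : 0 ≤ ∫ ξ in b..(1:ℝ), Ff m t |ξ| :=
      intervalIntegral.integral_nonneg hb1 (fun u _ => Ff_nonneg m t (abs_nonneg u))
    linarith [e1, e2]
  -- step 2 : remove abs
  have hstep2 : (∫ ξ in a..b, Ff m t |ξ|) = ∫ ξ in a..b, Ff m t ξ := by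
    apply intervalIntegral.integral_congr
    intro x hx
    rw [Set.uIcc_of_le hab] at hx
    simp only [abs_of_pos (lt_of_lt_of_le ha hx.1)]
  -- step 3 : split into average and oscillation
  have hinth : IntervalIntegrable (fun r => Real.exp (-(r^2)*t) / Qf m r) volume a b :=
    intervalIntegrable_of_contAt ha (fun x hx => continuousAt_hf hx) hab
  have hintch : IntervalIntegrable
      (fun r => Real.cos (2*t*Real.sqrt (Qf m r)) * (Real.exp (-(r^2)*t) / Qf m r)) volume a b :=
    intervalIntegrable_of_contAt ha (fun x hx => continuousAt_coshf hx) hab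
  have hstep3 : (∫ ξ in a..b, Ff m t ξ)
      = (1/2) * (∫ r in a..b, Real.exp (-(r^2)*t) / Qf m r)
        - (1/2) * ∫ r in a..b, Real.cos (2*t*Real.sqrt (Qf m r)) * (Real.exp (-(r^2)*t) / Qf m r) := by
    have hcong : ∀ x ∈ Set.uIcc a b, Ff m t x
        = (1/2) * (Real.exp (-(x^2)*t) / Qf m x)
          - (1/2) * (Real.cos (2*t*Real.sqrt (Qf m x)) * (Real.exp (-(x^2)*t) / Qf m x)) := by
      intro x _
      rw [Ff, Real.sin_sq_eq_half_sub]
      rw [show 2*(t*Real.sqrt (Qf m x)) = 2*t*Real.sqrt (Qf m x) by ring]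
      ring
    rw [intervalIntegral.integral_congr hcong, intervalIntegral.integral_sub
      (hinth.const_mul _) (hintch.const_mul _), intervalIntegral.integral_const_mul,
      intervalIntegral.integral_const_mul]
  -- step 4 : average part lower bound
  have hstep4 : (Real.exp 1)⁻¹/(1+m^2) * (Real.log t/2)
      ≤ ∫ r in a..b, Real.exp (-(r^2)*t) / Qf m r := by
    have hcontg : IntervalIntegrable (fun x : ℝ => (Real.exp 1)⁻¹/(1+m^2) * (1/x)) volume a b :=
      intervalIntegrable_of_contAt ha (fun x hx =>
        continuousAt_const.mul (continuousAt_const.div continuousAt_id hx.ne')) hab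
    have h1 : (∫ x in a..b, (Real.exp 1)⁻¹/(1+m^2) * (1/x))
        ≤ ∫ r in a..b, Real.exp (-(r^2)*t) / Qf m r := by
      apply intervalIntegral.integral_mono_on hab hcontg hinth
      intro x hx
      have hx0 : 0 < x := lt_of_lt_of_le ha hx.1
      have hx1 : x ≤ 1 := le_trans hx.2 hb1
      have hQpos := Qf_pos m hx0
      have hQle : Qf m x ≤ (1+m^2)*x := Qf_le m hx0.le hx1
      have hexp : Real.exp (-1 : ℝ) ≤ Real.exp (-(x^2)*t) := by
        apply Real.exp_le_exp.2
        have hxb : x ≤ b := hx.2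
        have : x^2*t ≤ 1 := by
          have hb2 : b^2 * t = 1 := by
            rw [hbdef]
            rw [show ((Real.sqrt t)⁻¹)^2 = ((Real.sqrt t)*(Real.sqrt t))⁻¹ by
              rw [sq, mul_inv]]
            rw [hss]
            field_simp
          have : x^2 ≤ b^2 := by nlinarith
          nlinarith
        linarith
      calc (Real.exp 1)⁻¹/(1+m^2) * (1/x) = Real.exp (-1:ℝ)/((1+m^2)*x) := by
            rw [Real.exp_neg]
            field_simp
        _ ≤ Real.exp (-(x^2)*t)/Qf m x :=
            div_le_div₀ (Real.exp_pos _).le hexp hQpos hQle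
    have h2 : (∫ x in a..b, (Real.exp 1)⁻¹/(1+m^2) * (1/x))
        = (Real.exp 1)⁻¹/(1+m^2) * (Real.log t/2) := by
      rw [intervalIntegral.integral_const_mul, integral_one_div]
      · congr 1
        have hba : b/a = Real.sqrt t := by
          rw [hbdef, hadef]
          field_simp
          rw [Real.sq_sqrt ht0.le]
        rw [hba, Real.log_sqrt ht0.le]
      · rw [Set.uIcc_of_le hab]
        rintro ⟨h1', _⟩; linarith
    linarith [h2.symm.le, h1]
  -- step 5 : oscillation bound
  have hstep5 : |∫ r in a..b, Real.cos (2*t*Real.sqrt (Qf m r)) * (Real.exp (-(r^2)*t) / Qf m r)|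
      ≤ 2 * (2*Real.sqrt 2/(m^3*Real.sqrt t)) := by
    have h1 := oscillation_bound hm ht0 ha hab hbst
    have h2 := psiA_bound hm ht1
    have : psiF m t a ≤ 2*Real.sqrt 2/(m^3*Real.sqrt t) := h2
    linarith
  -- combine
  have hE : (0:ℝ) < Real.exp 1 := Real.exp_pos 1
  have hm2 : (0:ℝ) < 1 + m^2 := by positivity
  set c : ℝ := 8*Real.exp 1*(1+m^2) with hcdef
  have hc : 0 < c := by positivity
  have hosc2 : (2:ℝ) * (2*Real.sqrt 2/(m^3*Real.sqrt t)) ≤ 2/c := by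
    have := herr
    rw [hcdef]
    calc (2:ℝ) * (2*Real.sqrt 2/(m^3*Real.sqrt t))
        ≤ 2 * (1/(8*Real.exp 1*(1+m^2))) := by linarith
      _ = 2/(8*Real.exp 1*(1+m^2)) := by ring
  have hA : (Real.exp 1)⁻¹/(1+m^2) * (Real.log t/2) * (1/2) = 2 * (Real.log t / c) := by
    rw [hcdef]
    field_simp
    ring
  have hgoal2 : 1/c * Real.log t ≤ 2 * (Real.log t/c) - (1/2)*(2/c) := by
    have h1 : 2 * (Real.log t/c) - (1/2)*(2/c) - 1/c * Real.log t = (Real.log t - 1)/c := by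
      ring
    have h2 : 0 ≤ (Real.log t - 1)/c := by
      apply div_nonneg _ hc.le
      linarith
    linarith
  -- final chain
  have hcore : 1/c * Real.log t ≤ ∫ ξ in a..b, Ff m t ξ := by
    rw [hstep3]
    have habs : - (1/2) * ∫ r in a..b, Real.cos (2*t*Real.sqrt (Qf m r)) * (Real.exp (-(r^2)*t) / Qf m r)
        ≥ - ((1/2)*(2/c)) := by
      have h1 : (∫ r in a..b, Real.cos (2*t*Real.sqrt (Qf m r)) * (Real.exp (-(r^2)*t) / Qf m r))
          ≤ 2/c := by
        have := le_trans (le_abs_self _) (le_trans hstep5 hosc2)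
        exact this
      nlinarith
    have h4 : (1/2) * ((Real.exp 1)⁻¹/(1+m^2) * (Real.log t/2))
        ≤ (1/2) * ∫ r in a..b, Real.exp (-(r^2)*t) / Qf m r := by
      linarith [hstep4]
    have h5 : (1/2) * ((Real.exp 1)⁻¹/(1+m^2) * (Real.log t/2)) = 2 * (Real.log t / c) := by
      rw [← hA]; ring
    linarith [hgoal2]
  calc 1/(8*Real.exp 1*(1+m^2)) * Real.log t = 1/c * Real.log t := by rw [hcdef]
    _ ≤ ∫ ξ in a..b, Ff m t ξ := hcore
    _ = ∫ ξ in a..b, Ff m t |ξ| := hstep2.symm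
    _ ≤ ∫ ξ in (-1:ℝ)..1, Ff m t |ξ| := hstep1

/-- Lemma 6.7: log-growth of the profile for `n = 1`, `θ = 1/2`. -/
theorem stmt19 (m : ℝ) (hm : 0 < m) :
    ∃ C₁ C₂ t₀ : ℝ, 0 < C₁ ∧ 0 < C₂ ∧ 1 < t₀ ∧
      ∀ t : ℝ, t₀ ≤ t → ∀ P₁ : ℝ,
        C₁ / (m ^ 2 + 2) * P₁ ^ 2 * Real.log t ≤
            (∫ ξ in {ξ : ℝ | |ξ| ≤ 1}, (phi m (1 / 2) P₁ t |ξ|) ^ 2) ∧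
          (∫ ξ in {ξ : ℝ | |ξ| ≤ 1}, (phi m (1 / 2) P₁ t |ξ|) ^ 2) ≤
            C₂ / m ^ 2 * P₁ ^ 2 * Real.log t := by
  have hE : (0:ℝ) < Real.exp 1 := Real.exp_pos 1
  have hm2 : (0:ℝ) < 1 + m^2 := by positivity
  set K : ℝ := 8*(1+m^2)/m^2 with hKdef
  set L : ℝ := 2*Real.sqrt 2*(8*Real.exp 1*(1+m^2))/m^3 with hLdef
  have hK : 0 < K := by rw [hKdef]; positivity
  have hs2 : (0:ℝ) < Real.sqrt 2 := Real.sqrt_pos.2 (by norm_num)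
  have hL : 0 < L := by rw [hLdef]; positivity
  refine ⟨(m^2+2)/(8*Real.exp 1*(1+m^2)), 2*m^2+8, 3 + K^2 + L^2, by positivity, by positivity,
    by nlinarith, ?_⟩
  intro t ht P₁
  have ht3 : 3 ≤ t := by nlinarith
  have ht0 : (0:ℝ) < t := by linarith
  have hst : 0 < Real.sqrt t := Real.sqrt_pos.2 ht0
  have hlog : 1 ≤ Real.log t := by
    rw [Real.le_log_iff_exp_le ht0]
    have := Real.exp_one_lt_d9
    linarith
  have hlog0 : 0 < Real.log t := by linarith
  have hKt : K ≤ Real.sqrt t := by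
    have h1 : K = Real.sqrt (K^2) := (Real.sqrt_sq hK.le).symm
    rw [h1]
    apply Real.sqrt_le_sqrt
    nlinarith
  have hLt : L ≤ Real.sqrt t := by
    have h1 : L = Real.sqrt (L^2) := (Real.sqrt_sq hL.le).symm
    rw [h1]
    apply Real.sqrt_le_sqrt
    nlinarith
  have hbstar : (Real.sqrt t)⁻¹ ≤ m^2/(8*(1+m^2)) := by
    have h1 : (Real.sqrt t)⁻¹ ≤ K⁻¹ := by
      apply inv_anti₀ hK hKt
    have h2 : K⁻¹ = m^2/(8*(1+m^2)) := by
      rw [hKdef, ← one_div, one_div_div]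
    linarith
  have herr : 2*Real.sqrt 2/(m^3*Real.sqrt t) ≤ 1/(8*Real.exp 1*(1+m^2)) := by
    rw [div_le_div_iff₀ (by positivity) (by positivity)]
    have h1 : m^3 * L ≤ m^3 * Real.sqrt t := by nlinarith [pow_pos hm 3]
    have h2 : m^3 * L = 2*Real.sqrt 2*(8*Real.exp 1*(1+m^2)) := by
      rw [hLdef]
      field_simp
    nlinarith [h1, h2]
  -- convert set integral
  have hset : {ξ : ℝ | |ξ| ≤ 1} = Set.Icc (-1:ℝ) 1 := by
    ext ξ; simp [abs_le]
  have hconv : (∫ ξ in {ξ : ℝ | |ξ| ≤ 1}, (phi m (1/2) P₁ t |ξ|)^2)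
      = P₁^2 * ∫ ξ in (-1:ℝ)..1, Ff m t |ξ| := by
    rw [hset, MeasureTheory.integral_Icc_eq_integral_Ioc,
      ← intervalIntegral.integral_of_le (by norm_num : (-1:ℝ) ≤ 1)]
    simp_rw [phi_sq_eq]
    rw [intervalIntegral.integral_const_mul]
  have hJlow := J_lower hm ht3 hlog hbstar herr
  have hJup := J_upper hm ht3 hlog
  constructor
  · rw [hconv]
    have hC1 : (m^2+2)/(8*Real.exp 1*(1+m^2))/(m^2+2) = 1/(8*Real.exp 1*(1+m^2)) := by
      rw [div_div, mul_comm (8*Real.exp 1*(1+m^2)) (m^2+2), ← div_div]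
      rw [div_self (by positivity : (m^2+2:ℝ) ≠ 0)]
    calc (m^2+2)/(8*Real.exp 1*(1+m^2))/(m^2+2) * P₁^2 * Real.log t
        = P₁^2 * (1/(8*Real.exp 1*(1+m^2)) * Real.log t) := by rw [hC1]; ring
      _ ≤ P₁^2 * ∫ ξ in (-1:ℝ)..1, Ff m t |ξ| :=
          mul_le_mul_of_nonneg_left hJlow (sq_nonneg P₁)
  · rw [hconv]
    calc P₁^2 * ∫ ξ in (-1:ℝ)..1, Ff m t |ξ|
        ≤ P₁^2 * ((2*m^2+8)/m^2 * Real.log t) :=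
          mul_le_mul_of_nonneg_left hJup (sq_nonneg P₁)
      _ = (2*m^2+8)/m^2 * P₁^2 * Real.log t := by ring

end
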